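/- Let n be a positive integer and let W be an n×n real symmetric matrix with tr W > 0 whose rank is not equal to 1. Then the matrix B(W) := (tr W)·((tr W)·Iₙ − W) − σ₂(W)·Iₙ is positive definite, i.e. ξᵀ B(W) ξ > 0 for every nonzero ξ ∈ ℝⁿ. -/

import Mathlib

open Matrix

/-- σ₂ of a matrix: `((tr W)² − tr(W²))/2`. -/
noncomputable def sigma2 {n : ℕ} (W : Matrix (Fin n) (Fin n) ℝ) : ℝ :=
  ((W.trace) ^ 2 - (W * W).trace) / 2

/-- Conjugation of a positive definite matrix by a unitary is positive definite. -/
lemma conj_posDef {n : ℕ} (U : Matrix.unitaryGroup (Fin n) ℝ)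
    {D : Matrix (Fin n) (Fin n) ℝ} (hD : D.PosDef) :
    ((U : Matrix (Fin n) (Fin n) ℝ) * D * star (U : Matrix (Fin n) (Fin n) ℝ)).PosDef := by
  have h1 : (U : Matrix (Fin n) (Fin n) ℝ) * star (U : Matrix (Fin n) (Fin n) ℝ) = 1 :=
    Matrix.mem_unitaryGroup_iff.mp U.2
  refine Matrix.PosDef.of_dotProduct_mulVec_pos ?_ ?_
  · have : ((U : Matrix (Fin n) (Fin n) ℝ) * D * star (U : Matrix (Fin n) (Fin n) ℝ))
        = (star (U : Matrix (Fin n) (Fin n) ℝ))ᴴ * D * (star (U : Matrix (Fin n) (Fin n) ℝ)) := by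
      rw [Matrix.star_eq_conjTranspose, Matrix.conjTranspose_conjTranspose]
    rw [this]
    exact Matrix.isHermitian_conjTranspose_mul_mul _ hD.1
  · intro x hx
    have hUx : star (U : Matrix (Fin n) (Fin n) ℝ) *ᵥ x ≠ 0 := by
      intro h
      apply hx
      have := congrArg (fun v => (U : Matrix (Fin n) (Fin n) ℝ) *ᵥ v) h
      simpa [Matrix.mulVec_mulVec, h1] using this
    have := hD.dotProduct_mulVec_pos hUx
    simpa only [star_mulVec, Matrix.star_eq_conjTranspose, Matrix.conjTranspose_conjTranspose,
      dotProduct_mulVec, vecMul_vecMul, Matrix.mul_assoc] using this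

/-- For a real symmetric `n × n` matrix `W` with `tr W > 0` whose rank is not
equal to 1, the matrix `B(W) = (tr W)·((tr W)·I − W) − σ₂(W)·I` is positive definite. -/
theorem stmt1 (n : ℕ) (hn : 0 < n) (W : Matrix (Fin n) (Fin n) ℝ)
    (hsymm : W.IsSymm) (htr : 0 < W.trace) (hrank : W.rank ≠ 1) :
    (W.trace • (W.trace • (1 : Matrix (Fin n) (Fin n) ℝ) - W)
      - sigma2 W • (1 : Matrix (Fin n) (Fin n) ℝ)).PosDef := by
  classical
  have hA : W.IsHermitian := by
    rwa [Matrix.IsHermitian, Matrix.conjTranspose_eq_transpose_of_trivial]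
  set τ := W.trace with hτ
  set μ := hA.eigenvalues with hμ
  set U := hA.eigenvectorUnitary with hU
  have h1 : (U : Matrix (Fin n) (Fin n) ℝ) * star (U : Matrix (Fin n) (Fin n) ℝ) = 1 :=
    Matrix.mem_unitaryGroup_iff.mp U.2
  have hdiag : star (U : Matrix (Fin n) (Fin n) ℝ) * W * (U : Matrix (Fin n) (Fin n) ℝ)
      = diagonal μ := by
    have := hA.conjStarAlgAut_star_eigenvectorUnitary
    simpa only [RCLike.ofReal_real_eq_id, Function.id_comp, Unitary.conjStarAlgAut_star_apply] using this
  -- trace facts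
  have htrace : ∑ i, μ i = τ := by
    have := congrArg Matrix.trace hdiag
    rw [Matrix.trace_mul_cycle, h1, Matrix.one_mul, Matrix.trace_diagonal] at this
    exact this.symm
  have htrace2 : ∑ i, μ i ^ 2 = (W * W).trace := by
    have h2 : diagonal μ * diagonal μ
        = star (U : Matrix (Fin n) (Fin n) ℝ) * (W * W) * (U : Matrix (Fin n) (Fin n) ℝ) := by
      rw [← hdiag]
      calc (star (U : Matrix (Fin n) (Fin n) ℝ) * W * (U : Matrix (Fin n) (Fin n) ℝ))
          * (star (U : Matrix (Fin n) (Fin n) ℝ) * W * (U : Matrix (Fin n) (Fin n) ℝ))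
          = star (U : Matrix (Fin n) (Fin n) ℝ) * W * (((U : Matrix (Fin n) (Fin n) ℝ)
            * star (U : Matrix (Fin n) (Fin n) ℝ)) * (W * (U : Matrix (Fin n) (Fin n) ℝ))) := by
            simp only [Matrix.mul_assoc]
        _ = star (U : Matrix (Fin n) (Fin n) ℝ) * (W * W) * (U : Matrix (Fin n) (Fin n) ℝ) := by
            rw [h1, Matrix.one_mul]; simp only [Matrix.mul_assoc]
    have := congrArg Matrix.trace h2
    rw [Matrix.diagonal_mul_diagonal, Matrix.trace_diagonal, Matrix.trace_mul_cycle,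
      h1, Matrix.one_mul] at this
    simpa [pow_two] using this
    
  have hσ : sigma2 W = (τ ^ 2 - ∑ j, μ j ^ 2) / 2 := by 
    rw [sigma2, htrace2]
  -- key inequality
  have hkey : ∀ i, 0 < τ ^ 2 - sigma2 W - τ * μ i := by
    intro i
    have hrest : (0:ℝ) ≤ ∑ j ∈ Finset.univ.erase i, μ j ^ 2 :=
      Finset.sum_nonneg fun _ _ => sq_nonneg _
    have hsplit : ∑ j, μ j ^ 2 = μ i ^ 2 + ∑ j ∈ Finset.univ.erase i, μ j ^ 2 :=
      (Finset.add_sum_erase _ _ (Finset.mem_univ i)).symm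
    have htr' : τ = μ i + ∑ j ∈ Finset.univ.erase i, μ j := by
      rw [← htrace, (Finset.add_sum_erase _ _ (Finset.mem_univ i))]
    have expr : τ ^ 2 - sigma2 W - τ * μ i
        = ((τ - μ i) ^ 2 + ∑ j ∈ Finset.univ.erase i, μ j ^ 2) / 2 := by
      rw [hσ, hsplit]; ring
    rw [expr]
    rcases (add_nonneg (sq_nonneg (τ - μ i)) hrest).lt_or_eq with h | h
    · linarith
    · exfalso
      have hsq : (τ - μ i) ^ 2 = 0 := by nlinarith [sq_nonneg (τ - μ i)]
      have hμi : μ i = τ := by nlinarith [sq_nonneg (τ - μ i)]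
      have hsum0 : ∑ j ∈ Finset.univ.erase i, μ j ^ 2 = 0 := by linarith [sq_nonneg (τ - μ i)]
      have hzero : ∀ j, j ≠ i → μ j = 0 := by
        intro j hj
        have := (Finset.sum_eq_zero_iff_of_nonneg fun k _ => sq_nonneg (μ k)).mp hsum0 j
          (Finset.mem_erase.mpr ⟨hj, Finset.mem_univ j⟩)
        exact pow_eq_zero_iff two_ne_zero |>.mp this
      apply hrank
      rw [hA.rank_eq_card_non_zero_eigs, Fintype.card_eq_one_iff]
      refine ⟨⟨i, by rw [← hμ, hμi]; exact htr.ne'⟩, fun b => Subtype.ext ?_⟩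
      by_contra hb
      exact b.2 (hzero b hb)
  -- matrix identity
  have hW : W = (U : Matrix (Fin n) (Fin n) ℝ) * diagonal μ
      * star (U : Matrix (Fin n) (Fin n) ℝ) := by
    have := hA.spectral_theorem
    simpa only [RCLike.ofReal_real_eq_id, Function.id_comp, Unitary.conjStarAlgAut_apply] using this
  have hd : diagonal (fun i => τ ^ 2 - sigma2 W - τ * μ i)
      = (τ ^ 2 - sigma2 W) • (1 : Matrix (Fin n) (Fin n) ℝ) - τ • diagonal μ := by
    ext i j
    rcases eq_or_ne i j with h | h
    · subst h
      simp [Matrix.diagonal_apply_eq, Matrix.one_apply_eq]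
    · simp [Matrix.diagonal_apply_ne _ h, Matrix.one_apply_ne h]
  have key : τ • (τ • (1 : Matrix (Fin n) (Fin n) ℝ) - W) - sigma2 W • 1
      = (U : Matrix (Fin n) (Fin n) ℝ) * diagonal (fun i => τ ^ 2 - sigma2 W - τ * μ i)
        * star (U : Matrix (Fin n) (Fin n) ℝ) := by
    rw [hd, mul_sub, sub_mul, mul_smul_comm, smul_mul_assoc, mul_smul_comm, smul_mul_assoc,
      mul_one, h1, ← hW, smul_sub, smul_smul, ← pow_two, sub_smul]
    abel
  rw [key]
  exact conj_posDef U (Matrix.PosDef.diagonal hkey)
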